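/- Suppose M[e,j] = ⟨a_e, b_j⟩ with a_e, b_j ∈ Q (three-dimensional second-order cone) for e a 2-subset of {1,…,n} and j ∈ {1,…,n}, that M[e,j] = 0 whenever j ∈ e, and that n ≥ 3n_0² for some n_0 ≥ 2. Then there exists a subset C ⊆ {1,…,n} with |C| ≥ n_0 such that M[e,j] = 0 for all 2-subsets e ⊆ C and all j ∈ C. -/

import Mathlib

/-- The three-dimensional second-order cone. -/
def soc (v : Fin 3 → ℝ) : Prop := Real.sqrt (v 0 ^ 2 + v 1 ^ 2) ≤ v 2


lemma soc_sq {v : Fin 3 → ℝ} (h : soc v) :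
    v 0 ^ 2 + v 1 ^ 2 ≤ v 2 ^ 2 ∧ 0 ≤ v 2 := by
  have h0 : 0 ≤ v 2 := le_trans (Real.sqrt_nonneg _) h
  refine ⟨?_, h0⟩
  have hs : Real.sqrt (v 0 ^ 2 + v 1 ^ 2) ^ 2 = v 0 ^ 2 + v 1 ^ 2 :=
    Real.sq_sqrt (by positivity)
  have := mul_self_le_mul_self (Real.sqrt_nonneg (v 0 ^ 2 + v 1 ^ 2)) h
  nlinarith [hs]

lemma soc_zero2 {v : Fin 3 → ℝ} (h : soc v) (h2 : v 2 = 0) : ∀ i, v i = 0 := by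
  obtain ⟨h1, _⟩ := soc_sq h
  rw [h2] at h1
  have hv0 : v 0 = 0 := by
    have : v 0 ^ 2 = 0 := le_antisymm (by nlinarith [sq_nonneg (v 1)]) (sq_nonneg _)
    exact pow_eq_zero_iff (two_ne_zero) |>.mp this
  have hv1 : v 1 = 0 := by
    have : v 1 ^ 2 = 0 := le_antisymm (by nlinarith [sq_nonneg (v 0)]) (sq_nonneg _)
    exact pow_eq_zero_iff (two_ne_zero) |>.mp this
  intro i
  fin_cases i <;> simp [hv0, hv1, h2]

lemma ortho_interior {a b : Fin 3 → ℝ} (ha : soc a) (hbs : soc b)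
    (hb : b 0 ^ 2 + b 1 ^ 2 < b 2 ^ 2)
    (h : a 0 * b 0 + a 1 * b 1 + a 2 * b 2 = 0) : ∀ i, a i = 0 := by
  obtain ⟨hA, hA2⟩ := soc_sq ha
  obtain ⟨hB, hB2⟩ := soc_sq hbs
  have ha2 : a 2 = 0 := by
    by_contra hne
    have ha2p : 0 < a 2 := lt_of_le_of_ne hA2 (Ne.symm hne)
    have hb2p : 0 < b 2 := by nlinarith [sq_nonneg (b 0), sq_nonneg (b 1)]
    have h1 : a 0 * b 0 + a 1 * b 1 = -(a 2 * b 2) := by linarith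
    have h1' : (a 0 * b 0 + a 1 * b 1) ^ 2 = a 2 ^ 2 * b 2 ^ 2 := by rw [h1]; ring
    have hcs : (a 0 * b 0 + a 1 * b 1) ^ 2 + (a 0 * b 1 - a 1 * b 0) ^ 2
        = (a 0 ^ 2 + a 1 ^ 2) * (b 0 ^ 2 + b 1 ^ 2) := by ring
    have h2 : a 2 ^ 2 * b 2 ^ 2 ≤ (a 0 ^ 2 + a 1 ^ 2) * (b 0 ^ 2 + b 1 ^ 2) := by
      nlinarith [sq_nonneg (a 0 * b 1 - a 1 * b 0)]
    have h3 : (a 0 ^ 2 + a 1 ^ 2) * (b 0 ^ 2 + b 1 ^ 2) ≤ a 2 ^ 2 * (b 0 ^ 2 + b 1 ^ 2) := by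
      have := mul_nonneg (sub_nonneg.mpr hA) (by positivity : (0:ℝ) ≤ b 0 ^ 2 + b 1 ^ 2)
      nlinarith
    have h4 : a 2 ^ 2 * (b 0 ^ 2 + b 1 ^ 2) < a 2 ^ 2 * b 2 ^ 2 :=
      (mul_lt_mul_iff_right₀ (by positivity)).mpr hb
    linarith
  exact soc_zero2 ha ha2

lemma ortho_boundary {a b : Fin 3 → ℝ} (ha : soc a) (hbs : soc b)
    (ha2 : a 2 ≠ 0) (hb2 : b 2 ≠ 0)
    (h : a 0 * b 0 + a 1 * b 1 + a 2 * b 2 = 0) :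
    a 0 * b 2 = -(a 2 * b 0) ∧ a 1 * b 2 = -(a 2 * b 1) := by
  obtain ⟨hA, hA2⟩ := soc_sq ha
  obtain ⟨hB, hB2⟩ := soc_sq hbs
  have ha2p : 0 < a 2 := lt_of_le_of_ne hA2 (Ne.symm ha2)
  have hb2p : 0 < b 2 := lt_of_le_of_ne hB2 (Ne.symm hb2)
  have hcs : (a 0 * b 0 + a 1 * b 1) ^ 2 + (a 0 * b 1 - a 1 * b 0) ^ 2
      = (a 0 ^ 2 + a 1 ^ 2) * (b 0 ^ 2 + b 1 ^ 2) := by ring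
  have hkey : (a 0 ^ 2 + a 1 ^ 2) * (b 0 ^ 2 + b 1 ^ 2) ≤ a 2 ^ 2 * b 2 ^ 2 := by
    have := mul_le_mul hA hB (by positivity) (by positivity)
    linarith
  have hsq : (a 0 * b 0 + a 1 * b 1) ^ 2 = a 2 ^ 2 * b 2 ^ 2 := by
    have : a 0 * b 0 + a 1 * b 1 = -(a 2 * b 2) := by linarith
    rw [this]; ring
  have hcross : (a 0 * b 1 - a 1 * b 0) ^ 2 = 0 := by nlinarith
  have hprod : (a 0 ^ 2 + a 1 ^ 2) * (b 0 ^ 2 + b 1 ^ 2) = a 2 ^ 2 * b 2 ^ 2 := by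
    linarith
  have heqb : b 0 ^ 2 + b 1 ^ 2 = b 2 ^ 2 := by
    have h3 : (a 0 ^ 2 + a 1 ^ 2) * (b 0 ^ 2 + b 1 ^ 2) ≤ a 2 ^ 2 * (b 0 ^ 2 + b 1 ^ 2) := by
      have := mul_nonneg (sub_nonneg.mpr hA) (by positivity : (0:ℝ) ≤ b 0 ^ 2 + b 1 ^ 2)
      nlinarith
    have h4 : a 2 ^ 2 * (b 0 ^ 2 + b 1 ^ 2) ≤ a 2 ^ 2 * b 2 ^ 2 :=
      (mul_le_mul_iff_right₀ (by positivity)).mpr hB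
    have h5 : a 2 ^ 2 * (b 0 ^ 2 + b 1 ^ 2) = a 2 ^ 2 * b 2 ^ 2 := le_antisymm h4 (by linarith)
    exact mul_left_cancel₀ (by positivity) h5
  have heqa : a 0 ^ 2 + a 1 ^ 2 = a 2 ^ 2 := by
    have h5 : (a 0 ^ 2 + a 1 ^ 2) * b 2 ^ 2 = a 2 ^ 2 * b 2 ^ 2 := by
      linear_combination hprod - (a 0 ^ 2 + a 1 ^ 2) * heqb
    have := mul_right_cancel₀ (by positivity : (b 2 ^ 2 : ℝ) ≠ 0) h5
    exact this
  constructor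
  · have hz : (a 0 * b 2 + a 2 * b 0) ^ 2 = 0 := by
      linear_combination hcross - a 0 ^ 2 * heqb - b 0 ^ 2 * heqa + (2 * a 0 * b 0) * h
    have := pow_eq_zero_iff (two_ne_zero) |>.mp hz
    linarith
  · have hz : (a 1 * b 2 + a 2 * b 1) ^ 2 = 0 := by
      linear_combination hcross - a 1 ^ 2 * heqb - b 1 ^ 2 * heqa + (2 * a 1 * b 1) * h
    have := pow_eq_zero_iff (two_ne_zero) |>.mp hz
    linarith

theorem exists_large_zero_block (n n0 : ℕ) (hn0 : 2 ≤ n0) (hn : 3 * n0 ^ 2 ≤ n)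
    (a : Sym2 (Fin n) → Fin 3 → ℝ) (b : Fin n → Fin 3 → ℝ)
    (ha : ∀ e, soc (a e)) (hb : ∀ j, soc (b j))
    (hzero : ∀ j1 j2 : Fin n, j1 ≠ j2 → ∑ x, a s(j1, j2) x * b j1 x = 0) :
    ∃ C : Finset (Fin n), n0 ≤ C.card ∧
      ∀ j1 ∈ C, ∀ j2 ∈ C, ∀ j ∈ C, j1 ≠ j2 →
        ∑ x, a s(j1, j2) x * b j x = 0 := by
  classical
  have hsum : ∀ (u w : Fin 3 → ℝ), (∑ x, u x * w x) = u 0 * w 0 + u 1 * w 1 + u 2 * w 2 := by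
    intro u w; simp [Fin.sum_univ_three]
  have hzsum : ∀ (e : Sym2 (Fin n)) (j : Fin n), (∀ i, a e i = 0) →
      ∑ x, a e x * b j x = 0 := by
    intro e j hz
    exact Finset.sum_eq_zero fun x _ => by rw [hz x, zero_mul]
  set Z : Finset (Fin n) := Finset.univ.filter (fun j => b j 2 = 0) with hZdef
  set I : Finset (Fin n) := Finset.univ.filter
    (fun j => b j 2 ≠ 0 ∧ b j 0 ^ 2 + b j 1 ^ 2 < b j 2 ^ 2) with hIdef
  set Bd : Finset (Fin n) := Finset.univ.filter
    (fun j => b j 2 ≠ 0 ∧ b j 0 ^ 2 + b j 1 ^ 2 = b j 2 ^ 2) with hBdef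
  set d : Fin n → ℝ × ℝ := fun j => (b j 0 / b j 2, b j 1 / b j 2) with hddef
  by_cases hZ : n0 ≤ Z.card
  · refine ⟨Z, hZ, ?_⟩
    intro j1 _ j2 _ j hj hne
    have hbj : b j 2 = 0 := (Finset.mem_filter.mp hj).2
    have hv := soc_zero2 (hb j) hbj
    exact Finset.sum_eq_zero fun x _ => by rw [hv x, mul_zero]
  by_cases hI : n0 ≤ I.card
  · refine ⟨I, hI, ?_⟩
    intro j1 hj1 j2 _ j _ hne
    obtain ⟨-, -, hlt⟩ := Finset.mem_filter.mp hj1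
    have hz := hzero j1 j2 hne
    rw [hsum] at hz
    exact hzsum _ _ (ortho_interior (ha _) (hb j1) hlt hz)
  set T : Finset (ℝ × ℝ) := Bd.image d with hTdef
  by_cases hF : ∃ v ∈ T, n0 ≤ (Bd.filter (fun j => d j = v)).card
  · obtain ⟨v, hvT, hvc⟩ := hF
    refine ⟨Bd.filter (fun j => d j = v), hvc, ?_⟩
    intro j1 hj1 j2 hj2 j hj hne
    obtain ⟨hj1B, hdj1⟩ := Finset.mem_filter.mp hj1
    obtain ⟨hjB, hdj⟩ := Finset.mem_filter.mp hj
    have hb12 : b j1 2 ≠ 0 := (Finset.mem_filter.mp hj1B).2.1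
    have hbj2 : b j 2 ≠ 0 := (Finset.mem_filter.mp hjB).2.1
    have hdd : d j = d j1 := by rw [hdj, hdj1]
    have hdd' : (b j 0 / b j 2, b j 1 / b j 2) = (b j1 0 / b j1 2, b j1 1 / b j1 2) := hdd
    have hp0 : b j 0 * b j1 2 = b j1 0 * b j 2 :=
      (div_eq_div_iff hbj2 hb12).mp (Prod.ext_iff.mp hdd').1
    have hp1 : b j 1 * b j1 2 = b j1 1 * b j 2 :=
      (div_eq_div_iff hbj2 hb12).mp (Prod.ext_iff.mp hdd').2
    have hz := hzero j1 j2 hne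
    rw [hsum] at hz
    rw [hsum]
    apply mul_left_cancel₀ hb12
    rw [mul_zero]
    linear_combination b j 2 * hz + (a s(j1, j2) 0) * hp0 + (a s(j1, j2) 1) * hp1
  -- case 4
  push_neg at hZ hI hF
  have hcover : ∀ j : Fin n, j ∈ Z ∪ I ∪ Bd := by
    intro j
    have h1 := (soc_sq (hb j)).1
    simp only [hZdef, hIdef, hBdef, Finset.mem_union, Finset.mem_filter,
      Finset.mem_univ, true_and]
    rcases eq_or_ne (b j 2) 0 with h | h
    · tauto
    · rcases lt_or_eq_of_le h1 with h' | h' <;> tauto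
  have hn_le : n ≤ Z.card + I.card + Bd.card := by
    have hsub : (Finset.univ : Finset (Fin n)) ⊆ Z ∪ I ∪ Bd := fun j _ => hcover j
    have h1 : (Finset.univ : Finset (Fin n)).card ≤ (Z ∪ I ∪ Bd).card :=
      Finset.card_le_card hsub
    have h2 := Finset.card_union_le (Z ∪ I) Bd
    have h3 := Finset.card_union_le Z I
    simp only [Finset.card_univ, Fintype.card_fin] at h1
    omega
  have hBcard : Bd.card = ∑ v ∈ T, (Bd.filter fun j => d j = v).card :=
    Finset.card_eq_sum_card_fiberwise (fun j hj => Finset.mem_image_of_mem d hj)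
  obtain ⟨m, hm⟩ : ∃ m, n0 = m + 1 := ⟨n0 - 1, by omega⟩
  have hBle : Bd.card ≤ T.card * m := by
    rw [hBcard]
    calc ∑ v ∈ T, (Bd.filter fun j => d j = v).card ≤ ∑ v ∈ T, m :=
          Finset.sum_le_sum (fun v hv => by have := hF v hv; omega)
      _ = T.card * m := by rw [Finset.sum_const, smul_eq_mul]
  have hchoice : ∀ v : {x // x ∈ T}, ∃ j, j ∈ Bd ∧ d j = (v : ℝ × ℝ) := by
    intro v
    obtain ⟨j, hj, hdj⟩ := Finset.mem_image.mp v.2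
    exact ⟨j, hj, hdj⟩
  choose g hgB hgd using hchoice
  have hginj : Function.Injective g := by
    intro v w hvw
    apply Subtype.ext
    rw [← hgd v, ← hgd w, hvw]
  set C2 : Finset (Fin n) := T.attach.image g with hC2def
  have hC2card : C2.card = T.card := by
    rw [hC2def, Finset.card_image_of_injective _ hginj, Finset.card_attach]
  have hC2B : ∀ j ∈ C2, j ∈ Bd := by
    intro j hj
    obtain ⟨v, -, rfl⟩ := Finset.mem_image.mp hj
    exact (hgB v)
  have hdisj : Disjoint I C2 := by
    rw [Finset.disjoint_left]
    intro j hjI hjC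
    have h1 := (Finset.mem_filter.mp hjI).2.2
    have h2 := (Finset.mem_filter.mp (hC2B j hjC)).2.2
    exact absurd h2 (ne_of_lt h1)
  refine ⟨I ∪ C2, ?_, ?_⟩
  · rw [Finset.card_union_of_disjoint hdisj, hC2card]
    by_contra hc
    push_neg at hc
    have hTc : T.card ≤ m := by omega
    have hBm : Bd.card ≤ m * m := le_trans hBle (Nat.mul_le_mul_right m hTc)
    have hZm : Z.card ≤ m := by omega
    have hIm : I.card ≤ m := by omega
    nlinarith [hn, hn_le, hZm, hIm, hBm, hm]
  · intro j1 hj1 j2 hj2 j hj hne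
    refine hzsum _ _ ?_
    rcases Finset.mem_union.mp hj1 with h1 | h1
    · have hlt := (Finset.mem_filter.mp h1).2.2
      have hz := hzero j1 j2 hne
      rw [hsum] at hz
      exact ortho_interior (ha _) (hb j1) hlt hz
    rcases Finset.mem_union.mp hj2 with h2 | h2
    · have hlt := (Finset.mem_filter.mp h2).2.2
      have hz := hzero j2 j1 hne.symm
      rw [hsum] at hz
      rw [Sym2.eq_swap (a := j1)]
      exact ortho_interior (ha _) (hb j2) hlt hz
    obtain ⟨v1, -, rfl⟩ := Finset.mem_image.mp h1
    obtain ⟨v2, -, rfl⟩ := Finset.mem_image.mp h2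
    by_cases ha2 : a s(g v1, g v2) 2 = 0
    · exact soc_zero2 (ha _) ha2
    exfalso
    have hB1 := Finset.mem_filter.mp (hgB v1)
    have hB2 := Finset.mem_filter.mp (hgB v2)
    have hb12 : b (g v1) 2 ≠ 0 := hB1.2.1
    have hb22 : b (g v2) 2 ≠ 0 := hB2.2.1
    have hz1 := hzero (g v1) (g v2) hne
    rw [hsum] at hz1
    have hz2 := hzero (g v2) (g v1) hne.symm
    rw [Sym2.eq_swap (a := g v2), hsum] at hz2
    obtain ⟨hx1, hy1⟩ := ortho_boundary (ha _) (hb (g v1)) ha2 hb12 hz1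
    obtain ⟨hx2, hy2⟩ := ortho_boundary (ha _) (hb (g v2)) ha2 hb22 hz2
    have hd0 : b (g v1) 0 * b (g v2) 2 = b (g v2) 0 * b (g v1) 2 := by
      apply mul_left_cancel₀ ha2
      linear_combination (b (g v2) 2) * hx1 - (b (g v1) 2) * hx2
    have hd1 : b (g v1) 1 * b (g v2) 2 = b (g v2) 1 * b (g v1) 2 := by
      apply mul_left_cancel₀ ha2
      linear_combination (b (g v2) 2) * hy1 - (b (g v1) 2) * hy2
    have hdeq : d (g v1) = d (g v2) := by
      have e0 : b (g v1) 0 / b (g v1) 2 = b (g v2) 0 / b (g v2) 2 :=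
        (div_eq_div_iff hb12 hb22).mpr hd0
      have e1 : b (g v1) 1 / b (g v1) 2 = b (g v2) 1 / b (g v2) 2 :=
        (div_eq_div_iff hb12 hb22).mpr hd1
      simp only [hddef, Prod.mk.injEq]
      exact ⟨e0, e1⟩
    have hv12 : v1 = v2 := by
      apply Subtype.ext
      rw [← hgd v1, ← hgd v2, hdeq]
    exact hne (by rw [hv12])
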